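/- Define N₀(x) = ∑_{r=1}^∞ 1/(e^{rx} − 1) for x > 0 (the series converges for every x > 0). Then N₀(x) is asymptotic to −(log x)/x as x → 0⁺; precisely, the function x ↦ (x·N₀(x))/(−log x) tends to 1 as x tends to 0 from the right. -/

import Mathlib

open Filter

private lemma N0_pos_aux {x : ℝ} (hx : 0 < x) (r : ℕ) :
    0 < Real.exp ((r + 1) * x) - 1 := by
  have : (0:ℝ) < (r + 1) * x := by positivity
  simpa using sub_pos.mpr (Real.one_lt_exp_iff.mpr this)

private lemma N0_summable {x : ℝ} (hx : 0 < x) :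
    Summable fun r : ℕ => (Real.exp ((r + 1) * x) - 1)⁻¹ := by
  have h1 : ∀ r : ℕ, (Real.exp ((r + 1) * x) - 1)⁻¹
      ≤ Real.exp (-x) ^ r * (Real.exp x - 1)⁻¹ := by
    intro r
    have hpos := N0_pos_aux hx r
    have hkey : Real.exp (r * x) * (Real.exp x - 1) ≤ Real.exp ((r + 1) * x) - 1 := by
      have : Real.exp (r * x) ≥ 1 := Real.one_le_exp (by positivity)
      have hm : Real.exp (r * x) * Real.exp x = Real.exp ((r + 1) * x) := by
        rw [← Real.exp_add]; ring_nf
      nlinarith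
    have hx1 : (0:ℝ) < Real.exp x - 1 := by
      simpa using sub_pos.mpr (Real.one_lt_exp_iff.mpr hx)
    have hg : (0:ℝ) < Real.exp (r * x) * (Real.exp x - 1) := by positivity
    calc (Real.exp ((r + 1) * x) - 1)⁻¹
        ≤ (Real.exp (r * x) * (Real.exp x - 1))⁻¹ := by
          apply inv_anti₀ hg hkey
      _ = Real.exp (-x) ^ r * (Real.exp x - 1)⁻¹ := by
          rw [mul_inv, ← Real.exp_neg, ← Real.exp_nat_mul]
          ring_nf
  refine Summable.of_nonneg_of_le (fun r => (inv_pos.mpr (N0_pos_aux hx r)).le) h1 ?_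
  exact (summable_geometric_of_lt_one (Real.exp_nonneg _)
    (Real.exp_lt_one_iff.mpr (neg_neg_iff_pos.mpr hx))).mul_right _
-- per-term upper bound
private lemma term_ub {x : ℝ} (hx : 0 < x) (r : ℕ) :
    x * (Real.exp ((r + 1) * x) - 1)⁻¹ ≤ ((r : ℝ) + 1)⁻¹ := by
  have ht : (0:ℝ) < ((r:ℝ) + 1) * x := by positivity
  have h1 : ((r:ℝ) + 1) * x ≤ Real.exp (((r:ℝ) + 1) * x) - 1 := by
    have := Real.add_one_le_exp (((r:ℝ) + 1) * x); linarith
  have h2 : (Real.exp (((r:ℝ)+1) * x) - 1)⁻¹ ≤ (((r:ℝ)+1) * x)⁻¹ :=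
    inv_anti₀ ht h1
  calc x * (Real.exp ((r + 1) * x) - 1)⁻¹ ≤ x * (((r:ℝ)+1) * x)⁻¹ := by
        exact mul_le_mul_of_nonneg_left h2 hx.le
    _ = ((r:ℝ) + 1)⁻¹ := by field_simp

-- per-term lower bound
private lemma term_lb {x : ℝ} (hx : 0 < x) (r : ℕ) :
    ((r : ℝ) + 1)⁻¹ - x ≤ x * (Real.exp ((r + 1) * x) - 1)⁻¹ := by
  set s : ℝ := (r : ℝ) + 1 with hs_def
  have hs : (0:ℝ) < s := by positivity
  set t : ℝ := s * x with ht_def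
  have ht : 0 < t := by positivity
  have hE : 0 < Real.exp t - 1 := by
    simpa using sub_pos.mpr (Real.one_lt_exp_iff.mpr ht)
  -- exp t * (1 - t) ≤ 1
  have h2 : Real.exp t * (1 - t) ≤ 1 := by
    have h3 : 1 - t ≤ Real.exp (-t) := by
      have := Real.add_one_le_exp (-t); linarith
    have h4 : Real.exp t * Real.exp (-t) = 1 := by
      rw [← Real.exp_add]; simp
    nlinarith [Real.exp_pos t]
  -- claim : (exp t - 1) * (1 - t) ≤ t
  have claim : (Real.exp t - 1) * (1 - t) ≤ t := by nlinarith
  have goal' : (s⁻¹ - x) * (Real.exp t - 1) ≤ x := by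
    have h3 : (s⁻¹ - x) * (Real.exp t - 1) = ((Real.exp t - 1) * (1 - t)) * s⁻¹ := by
      field_simp; ring
    rw [h3]
    calc ((Real.exp t - 1) * (1 - t)) * s⁻¹ ≤ t * s⁻¹ :=
          mul_le_mul_of_nonneg_right claim (inv_nonneg.mpr hs.le)
      _ = x := by field_simp [ht_def]; exact ht_def
  have : s⁻¹ - x ≤ x / (Real.exp t - 1) := (le_div_iff₀ hE).mpr goal'
  simpa [div_eq_mul_inv, ht_def, mul_comm] using this

-- tail term bound: if (r+1)*x ≥ 1 then term ≤ 2 exp(-(r+1)x)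
private lemma term_tail_ub {x : ℝ} (r : ℕ) (h1 : 1 ≤ ((r:ℝ) + 1) * x) :
    (Real.exp ((r + 1) * x) - 1)⁻¹ ≤ 2 * Real.exp (-(((r:ℝ) + 1) * x)) := by
  set t : ℝ := ((r:ℝ) + 1) * x with ht_def
  have h2 : (2:ℝ) ≤ Real.exp t := by
    have : (2:ℝ) ≤ Real.exp 1 := by have := Real.add_one_le_exp 1; linarith
    exact this.trans (Real.exp_le_exp.mpr h1)
  have hE : 0 < Real.exp t - 1 := by linarith
  have h3 : Real.exp t / 2 ≤ Real.exp t - 1 := by linarith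
  have h4 : (0:ℝ) < Real.exp t / 2 := by positivity
  calc (Real.exp t - 1)⁻¹ ≤ (Real.exp t / 2)⁻¹ := inv_anti₀ h4 h3
    _ = 2 * Real.exp (-t) := by rw [Real.exp_neg]; field_simp

private lemma one_sub_exp_neg {x : ℝ} (hx0 : 0 < x) (hx1 : x ≤ 1) :
    Real.exp (-1) * x ≤ 1 - Real.exp (-x) := by
  have h1 : x + 1 ≤ Real.exp x := Real.add_one_le_exp x
  have h2 : Real.exp (-1) ≤ Real.exp (-x) := Real.exp_le_exp.mpr (by linarith)
  have h3 : Real.exp (-x) * Real.exp x = 1 := by rw [← Real.exp_add]; simp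
  nlinarith [Real.exp_pos (-x)]

private lemma tail_bound {x : ℝ} (hx0 : 0 < x) (hx1 : x ≤ 1) :
    x * ∑' r : ℕ, (Real.exp (((r + ⌊x⁻¹⌋₊ : ℕ) + 1) * x) - 1)⁻¹ ≤ 6 := by
  set M : ℕ := ⌊x⁻¹⌋₊ with hM_def
  have hgeo : Real.exp (-x) < 1 := Real.exp_lt_one_iff.mpr (by linarith)
  have hgeo0 : (0:ℝ) ≤ Real.exp (-x) := (Real.exp_pos _).le
  have hSg : Summable fun r : ℕ => 2 * Real.exp (-(((M:ℝ)+1)*x)) * Real.exp (-x) ^ r :=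
    (summable_geometric_of_lt_one hgeo0 hgeo).mul_left _
  have hMx : 1 ≤ ((M:ℝ) + 1) * x := by
    have h := Nat.lt_floor_add_one x⁻¹
    have : x⁻¹ * x = 1 := inv_mul_cancel₀ hx0.ne'
    nlinarith
  have hterm : ∀ r : ℕ, (Real.exp (((r + M : ℕ) + 1) * x) - 1)⁻¹
      ≤ 2 * Real.exp (-(((M:ℝ)+1)*x)) * Real.exp (-x) ^ r := by
    intro r
    have h1 : 1 ≤ (((r + M : ℕ) : ℝ) + 1) * x := by
      push_cast
      calc (1:ℝ) ≤ ((M:ℝ) + 1) * x := hMx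
        _ ≤ ((r:ℝ) + (M:ℝ) + 1) * x := by nlinarith [Nat.cast_nonneg (α := ℝ) r]
    refine (term_tail_ub (r + M) h1).trans_eq ?_
    push_cast
    rw [← Real.exp_nat_mul, mul_assoc, ← Real.exp_add]
    congr 1
    ring
  have hS : Summable fun r : ℕ => (Real.exp (((r + M : ℕ) + 1) * x) - 1)⁻¹ := by
    refine Summable.of_nonneg_of_le (fun r => ?_) hterm hSg
    exact (inv_pos.mpr (N0_pos_aux hx0 (r + M))).le
  have htsum : ∑' r : ℕ, (Real.exp (((r + M : ℕ) + 1) * x) - 1)⁻¹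
      ≤ 2 * Real.exp (-(((M:ℝ)+1)*x)) * (1 - Real.exp (-x))⁻¹ := by
    calc ∑' r : ℕ, (Real.exp (((r + M : ℕ) + 1) * x) - 1)⁻¹
        ≤ ∑' r : ℕ, 2 * Real.exp (-(((M:ℝ)+1)*x)) * Real.exp (-x) ^ r :=
          Summable.tsum_le_tsum hterm hS hSg
      _ = 2 * Real.exp (-(((M:ℝ)+1)*x)) * (1 - Real.exp (-x))⁻¹ := by
          rw [tsum_mul_left, tsum_geometric_of_lt_one hgeo0 hgeo]
  have hinv : (1 - Real.exp (-x))⁻¹ ≤ Real.exp 1 * x⁻¹ := by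
    have h0 : (0:ℝ) < Real.exp (-1) * x := by positivity
    have := inv_anti₀ h0 (one_sub_exp_neg hx0 hx1)
    calc (1 - Real.exp (-x))⁻¹ ≤ (Real.exp (-1) * x)⁻¹ := this
      _ = Real.exp 1 * x⁻¹ := by rw [mul_inv, Real.exp_neg, inv_inv]
  have hexp1 : Real.exp 1 ≤ 3 := by
    have := Real.exp_one_lt_d9; linarith
  have hE1 : Real.exp (-(((M:ℝ)+1)*x)) ≤ 1 := Real.exp_le_one_iff.mpr (by nlinarith)
  have htail_nonneg : (0:ℝ) ≤ (1 - Real.exp (-x))⁻¹ := by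
    have : 0 < 1 - Real.exp (-x) := by linarith
    positivity
  calc x * ∑' r : ℕ, (Real.exp (((r + M : ℕ) + 1) * x) - 1)⁻¹
      ≤ x * (2 * Real.exp (-(((M:ℝ)+1)*x)) * (1 - Real.exp (-x))⁻¹) :=
        mul_le_mul_of_nonneg_left htsum hx0.le
    _ ≤ x * (2 * 1 * (Real.exp 1 * x⁻¹)) := by
        apply mul_le_mul_of_nonneg_left _ hx0.le
        apply mul_le_mul _ hinv htail_nonneg (by positivity)
        nlinarith [Real.exp_pos (-(((M:ℝ)+1)*x))]
    _ = 2 * Real.exp 1 := by field_simp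
    _ ≤ 6 := by linarith

private lemma harmonic_sum_eq (M : ℕ) :
    ∑ r ∈ Finset.range M, ((r:ℝ)+1)⁻¹ = (harmonic M : ℝ) := by
  rw [harmonic_eq_sum_Icc, ← Finset.Ico_add_one_right_eq_Icc, Finset.sum_Ico_eq_sum_range]
  push_cast
  simp [add_comm]


private lemma N0_sandwich {x : ℝ} (hx0 : 0 < x) (hx1 : x < 1/2) :
    -Real.log x - 1 ≤ x * ∑' r : ℕ, (Real.exp ((r + 1) * x) - 1)⁻¹ ∧
    x * ∑' r : ℕ, (Real.exp ((r + 1) * x) - 1)⁻¹ ≤ -Real.log x + 7 := by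
  set f : ℕ → ℝ := fun r => (Real.exp ((r + 1) * x) - 1)⁻¹ with hf_def
  set M : ℕ := ⌊x⁻¹⌋₊ with hM_def
  have hxinv1 : (1:ℝ) ≤ x⁻¹ := by
    rw [le_inv_comm₀] <;> linarith
  have hsplit : ∑ r ∈ Finset.range M, f r + ∑' r : ℕ, f (r + M) = ∑' r : ℕ, f r :=
    Summable.sum_add_tsum_nat_add M (N0_summable hx0)
  have hfpos : ∀ r : ℕ, 0 ≤ f r := fun r => (inv_pos.mpr (N0_pos_aux hx0 r)).le
  have htail0 : 0 ≤ ∑' r : ℕ, f (r + M) := tsum_nonneg fun r => hfpos _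
  have hloginv : Real.log x⁻¹ = -Real.log x := Real.log_inv x
  -- head bounds
  have hhead_ub : x * ∑ r ∈ Finset.range M, f r ≤ (harmonic M : ℝ) := by
    rw [Finset.mul_sum, ← harmonic_sum_eq M]
    exact Finset.sum_le_sum fun r _ => term_ub hx0 r
  have hhead_lb : (harmonic M : ℝ) - M * x ≤ x * ∑ r ∈ Finset.range M, f r := by
    rw [Finset.mul_sum, ← harmonic_sum_eq M]
    calc (∑ r ∈ Finset.range M, ((r:ℝ)+1)⁻¹) - M * x
        = ∑ r ∈ Finset.range M, (((r:ℝ)+1)⁻¹ - x) := by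
          rw [Finset.sum_sub_distrib, Finset.sum_const, Finset.card_range,
            nsmul_eq_mul]
      _ ≤ ∑ r ∈ Finset.range M, x * f r :=
          Finset.sum_le_sum fun r _ => term_lb hx0 r
  -- tail bound
  have htail_ub : x * ∑' r : ℕ, f (r + M) ≤ 6 := tail_bound hx0 (by linarith)
  have hMle : (M:ℝ) * x ≤ 1 := by
    have h1 : (M:ℝ) ≤ x⁻¹ := Nat.floor_le (by positivity)
    have h2 : x⁻¹ * x = 1 := inv_mul_cancel₀ hx0.ne'
    nlinarith
  have hharm_ub : (harmonic M : ℝ) ≤ 1 + Real.log x⁻¹ :=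
    harmonic_floor_le_one_add_log x⁻¹ hxinv1
  have hharm_lb : Real.log x⁻¹ ≤ (harmonic M : ℝ) :=
    log_le_harmonic_floor x⁻¹ (by positivity)
  constructor
  · calc -Real.log x - 1 = Real.log x⁻¹ - 1 := by rw [hloginv]
      _ ≤ (harmonic M : ℝ) - M * x := by linarith
      _ ≤ x * ∑ r ∈ Finset.range M, f r := hhead_lb
      _ ≤ x * ∑' r : ℕ, f r := by
          rw [← hsplit, mul_add]; nlinarith
  · calc x * ∑' r : ℕ, f r
        = x * ∑ r ∈ Finset.range M, f r + x * ∑' r : ℕ, f (r + M) := by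
          rw [← hsplit, mul_add]
      _ ≤ (harmonic M : ℝ) + 6 := add_le_add hhead_ub htail_ub
      _ ≤ -Real.log x + 7 := by rw [← hloginv]; linarith

theorem N0_asymptotic :
    (∀ x : ℝ, 0 < x → Summable fun r : ℕ => (Real.exp ((r + 1) * x) - 1)⁻¹) ∧
    Filter.Tendsto
      (fun x : ℝ => x * (∑' r : ℕ, (Real.exp ((r + 1) * x) - 1)⁻¹) / (-Real.log x))
      (nhdsWithin 0 (Set.Ioi 0)) (nhds 1) := by
  refine ⟨fun x hx => N0_summable hx, ?_⟩
  have hL : Tendsto (fun x : ℝ => -Real.log x) (nhdsWithin 0 (Set.Ioi 0)) atTop :=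
    tendsto_neg_atBot_atTop.comp Real.tendsto_log_nhdsGT_zero
  have h0 : Tendsto (fun x : ℝ => (-Real.log x)⁻¹) (nhdsWithin 0 (Set.Ioi 0)) (nhds 0) :=
    tendsto_inv_atTop_zero.comp hL
  have hlow : Tendsto (fun x : ℝ => 1 - (-Real.log x)⁻¹) (nhdsWithin 0 (Set.Ioi 0))
      (nhds 1) := by
    simpa using tendsto_const_nhds.sub h0
  have hhigh : Tendsto (fun x : ℝ => 1 + 7 * (-Real.log x)⁻¹) (nhdsWithin 0 (Set.Ioi 0))
      (nhds 1) := by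
    simpa using tendsto_const_nhds.add (h0.const_mul 7)
  have hmem : Set.Ioo (0:ℝ) (1/2) ∈ nhdsWithin (0:ℝ) (Set.Ioi 0) :=
    Ioo_mem_nhdsGT_of_mem (by norm_num)
  refine tendsto_of_tendsto_of_tendsto_of_le_of_le' hlow hhigh ?_ ?_
  · filter_upwards [hmem] with x hx
    obtain ⟨hx0, hx2⟩ := hx
    have hL0 : 0 < -Real.log x := by
      have := Real.log_neg hx0 (by linarith); linarith
    have hlogne : Real.log x ≠ 0 := fun h => by simp [h] at hL0
    have hs := (N0_sandwich hx0 hx2).1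
    have h1 : 1 - (-Real.log x)⁻¹ = (-Real.log x - 1) / (-Real.log x) := by
      field_simp; ring
    rw [h1]
    exact div_le_div_of_nonneg_right hs hL0.le
  · filter_upwards [hmem] with x hx
    obtain ⟨hx0, hx2⟩ := hx
    have hL0 : 0 < -Real.log x := by
      have := Real.log_neg hx0 (by linarith); linarith
    have hlogne : Real.log x ≠ 0 := fun h => by simp [h] at hL0
    have hs := (N0_sandwich hx0 hx2).2
    have h1 : 1 + 7 * (-Real.log x)⁻¹ = (-Real.log x + 7) / (-Real.log x) := by
      field_simp; ring
    rw [h1]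
    exact div_le_div_of_nonneg_right hs hL0.le
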